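/- Let m ∈ ℕ and let f_0, f_1, …, f_m : ℕ → ℝ be infinite real vectors such that for every nonzero tuple (C_0, …, C_m) ∈ ℝ^{m+1} the series ∑_{k∈ℕ} |∑_{r=0}^m C_r f_r(k)|² diverges to infinity (i.e. no nontrivial linear combination of f_0,…,f_m lies in ℓ²(ℕ)). Then for every s with 0 ≤ s ≤ m, the ratio Γ(f_0^{(n)}, …, f_m^{(n)}) / Γ(f_0^{(n)}, …, \widehat{f_s^{(n)}}, …, f_m^{(n)}) tends to +∞ as n → ∞, where the hat means the vector f_s^{(n)} is omitted. -/

import Mathlib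

open Matrix Filter Finset

lemma quad_expand {ι : Type*} [Fintype ι] (n : ℕ) (f : ι → ℕ → ℝ) (C : ι → ℝ) :
    C ⬝ᵥ (Matrix.of fun i j : ι => ∑ k ∈ Finset.range n, f i k * f j k) *ᵥ C
      = ∑ k ∈ Finset.range n, (∑ r, C r * f r k) ^ 2 := by
  have h : ∀ k, (∑ r, C r * f r k) ^ 2 = ∑ i, ∑ j, C i * f i k * (C j * f j k) := by
    intro k; rw [sq, Finset.sum_mul_sum]
  simp only [h, dotProduct, Matrix.mulVec, Matrix.of_apply, Finset.mul_sum,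
    Finset.sum_mul]
  conv_rhs => rw [Finset.sum_comm]
  refine Finset.sum_congr rfl fun i _ => ?_
  rw [Finset.sum_comm]
  exact Finset.sum_congr rfl fun j _ => Finset.sum_congr rfl fun k _ => by ring

lemma sum_sq_pos {p : ℕ} {C : Fin p → ℝ} (hC : C ≠ 0) : 0 < ∑ i, C i ^ 2 := by
  obtain ⟨i, hi⟩ := Function.ne_iff.1 hC
  refine Finset.sum_pos' (fun j _ => sq_nonneg _) ⟨i, Finset.mem_univ i, ?_⟩
  have : 0 < |C i| := abs_pos.2 hi
  calc (0:ℝ) < |C i| ^ 2 := by positivity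
  _ = C i ^ 2 := sq_abs _

lemma uniform_lower (m : ℕ) (f : Fin (m + 1) → ℕ → ℝ)
    (hf : ∀ C : Fin (m + 1) → ℝ, C ≠ 0 →
      Tendsto (fun n => ∑ k ∈ Finset.range n, (∑ r, C r * f r k) ^ 2) atTop atTop)
    (M : ℝ) :
    ∃ N : ℕ, ∀ n ≥ N, ∀ C : Fin (m + 1) → ℝ,
      M * (∑ i, C i ^ 2) ≤ ∑ k ∈ Finset.range n, (∑ r, C r * f r k) ^ 2 := by
  set q : ℕ → (Fin (m + 1) → ℝ) → ℝ :=
    fun n C => ∑ k ∈ Finset.range n, (∑ r, C r * f r k) ^ 2 with hqdef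
  have hmono : ∀ {a b : ℕ} (C), a ≤ b → q a C ≤ q b C := fun {a b} C hab =>
    Finset.sum_le_sum_of_subset_of_nonneg (Finset.range_subset_range.2 hab)
      (fun k _ _ => sq_nonneg _)
  have hcont : ∀ N, Continuous (q N) := fun N =>
    continuous_finset_sum _ fun k _ =>
      ((continuous_finset_sum _ fun r _ => (continuous_apply r).mul continuous_const).pow 2)
  set K : Set (Fin (m + 1) → ℝ) := {C | ∑ i, C i ^ 2 = 1} with hKdef
  have hKc : IsCompact K := by
    refine Metric.isCompact_of_isClosed_isBounded ?_ ?_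
    · exact isClosed_eq (continuous_finset_sum _ fun i _ => (continuous_apply i).pow 2)
        continuous_const
    · refine (Metric.isBounded_iff_subset_closedBall 0).2 ⟨1, fun C hC => ?_⟩
      rw [Metric.mem_closedBall, dist_zero_right]
      refine (pi_norm_le_iff_of_nonneg zero_le_one).2 fun i => ?_
      rw [Real.norm_eq_abs, ← sq_le_one_iff_abs_le_one]
      exact le_trans (Finset.single_le_sum (fun j _ => sq_nonneg (C j)) (Finset.mem_univ i))
        (le_of_eq hC)
  have hcover : K ⊆ ⋃ N : ℕ, {C | M < q N C} := by
    intro C hC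
    have hC0 : C ≠ 0 := by
      rintro rfl
      simp only [hKdef, Set.mem_setOf_eq] at hC
      simp at hC
    obtain ⟨N, hN⟩ := ((hf C hC0).eventually_gt_atTop M).exists
    exact Set.mem_iUnion.2 ⟨N, hN⟩
  obtain ⟨t, ht⟩ := hKc.elim_finite_subcover _
    (fun N => isOpen_lt continuous_const (hcont N)) hcover
  refine ⟨t.sup id, fun n hn C => ?_⟩
  have key : ∀ u ∈ K, M ≤ q n u := by
    intro u hu
    obtain ⟨N, hNt, hNu⟩ := Set.mem_iUnion₂.1 (ht hu)
    exact le_trans hNu.le (hmono u (le_trans (Finset.le_sup (f := id) hNt) hn))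
  by_cases hC0 : C = 0
  · subst hC0; simp [hqdef]
  · set S := ∑ i, C i ^ 2 with hSdef
    have hS : 0 < S := sum_sq_pos hC0
    have hsq : Real.sqrt S ^ 2 = S := Real.sq_sqrt hS.le
    have hu : (Real.sqrt S)⁻¹ • C ∈ K := by
      simp only [hKdef, Set.mem_setOf_eq, Pi.smul_apply, smul_eq_mul, mul_pow,
        ← Finset.mul_sum]
      rw [inv_pow, hsq, ← hSdef, inv_mul_cancel₀ hS.ne']
    have h1 : M ≤ q n ((Real.sqrt S)⁻¹ • C) := key _ hu
    have hhom : q n ((Real.sqrt S)⁻¹ • C) = S⁻¹ * q n C := by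
      simp only [hqdef, Pi.smul_apply, smul_eq_mul, mul_assoc, ← Finset.mul_sum, mul_pow,
        inv_pow, hsq]
    rw [hhom, inv_mul_eq_div, le_div_iff₀ hS] at h1
    linarith [h1]


/-- If no nontrivial linear combination of the vectors `f 0, …, f m : ℕ → ℝ` lies in `ℓ²(ℕ)`,
then for every `s` the ratio of the Gram determinant of the truncations of all `m + 1` vectors
to the Gram determinant of the truncations with `f s` omitted tends to `+∞`. -/
theorem gram_ratio_tendsto_atTop (m : ℕ) (f : Fin (m + 1) → ℕ → ℝ)
    (hf : ∀ C : Fin (m + 1) → ℝ, C ≠ 0 →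
      Tendsto (fun n => ∑ k ∈ Finset.range n, (∑ r, C r * f r k) ^ 2) atTop atTop) :
    ∀ s : Fin (m + 1),
      Tendsto (fun n =>
          (Matrix.det (Matrix.of fun i j : Fin (m + 1) =>
              ∑ k ∈ Finset.range n, f i k * f j k)) /
          (Matrix.det (Matrix.of fun i j : Fin m =>
              ∑ k ∈ Finset.range n, f (s.succAbove i) k * f (s.succAbove j) k)))
        atTop atTop := by
  intro s
  rw [tendsto_atTop_atTop]
  intro M
  set μ := max M 1 with hμdef
  have hμ : 0 < μ := lt_of_lt_of_le one_pos (le_max_right M 1)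
  obtain ⟨N, hN⟩ := uniform_lower m f hf μ
  refine ⟨N, fun n hn => ?_⟩
  set A : Matrix (Fin (m + 1)) (Fin (m + 1)) ℝ :=
    Matrix.of (fun i j => ∑ k ∈ Finset.range n, f i k * f j k) with hAdef
  set B : Matrix (Fin m) (Fin m) ℝ :=
    Matrix.of (fun i j => ∑ k ∈ Finset.range n, f (s.succAbove i) k * f (s.succAbove j) k)
    with hBdef
  have hbound : ∀ C : Fin (m + 1) → ℝ, μ * (∑ i, C i ^ 2) ≤ C ⬝ᵥ A *ᵥ C := fun C => by
    rw [hAdef, quad_expand]; exact hN n hn C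
  -- A is positive definite
  have hAherm : A.IsHermitian := by
    ext i j
    simp only [Matrix.conjTranspose_apply, hAdef, Matrix.of_apply, star_trivial]
    exact Finset.sum_congr rfl fun k _ => mul_comm _ _
  have hApos : A.PosDef := by
    refine Matrix.PosDef.of_dotProduct_mulVec_pos hAherm fun x hx => ?_
    rw [star_trivial]
    exact lt_of_lt_of_le (mul_pos hμ (sum_sq_pos hx)) (hbound x)
  have hdetA : 0 < A.det := hApos.det_pos
  -- B is positive definite
  have hBquad : ∀ y : Fin m → ℝ,
      y ⬝ᵥ B *ᵥ y = ∑ k ∈ Finset.range n, (∑ j, y j * f (s.succAbove j) k) ^ 2 := fun y =>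
    quad_expand n (fun j => f (s.succAbove j)) y
  have hBpos : B.PosDef := by
    have hBherm : B.IsHermitian := by
      ext i j
      simp only [Matrix.conjTranspose_apply, hBdef, Matrix.of_apply, star_trivial]
      exact Finset.sum_congr rfl fun k _ => mul_comm _ _
    refine Matrix.PosDef.of_dotProduct_mulVec_pos hBherm fun y hy => ?_
    rw [star_trivial, hBquad]
    set C : Fin (m + 1) → ℝ := s.insertNth 0 y with hCdef
    have hCy : ∀ j, C (s.succAbove j) = y j := fun j => by
      simp [hCdef]
    have hCne : C ≠ 0 := by
      intro h
      apply hy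
      funext j
      have := congrFun h (s.succAbove j)
      rwa [hCy j] at this
    have hq : (∑ k ∈ Finset.range n, (∑ j, y j * f (s.succAbove j) k) ^ 2)
        = C ⬝ᵥ A *ᵥ C := by
      rw [hAdef, quad_expand]
      refine Finset.sum_congr rfl fun k _ => ?_
      congr 1
      rw [Fin.sum_univ_succAbove _ s]
      simp only [hCdef, Fin.insertNth_apply_same, Fin.insertNth_apply_succAbove, zero_mul,
        zero_add]
    rw [hq]
    exact lt_of_lt_of_le (mul_pos hμ (sum_sq_pos hCne)) (hbound C)
  have hdetB : 0 < B.det := hBpos.det_pos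
  -- the inverse entry
  have hinv : A * A⁻¹ = 1 := Matrix.mul_nonsing_inv A (isUnit_iff_ne_zero.2 hdetA.ne')
  set x : Fin (m + 1) → ℝ := fun i => A⁻¹ i s with hxdef
  have hmul : A *ᵥ x = Pi.single s 1 := by
    funext i
    have h1 := congrFun (congrFun hinv i) s
    simp only [Matrix.mul_apply, Matrix.one_apply] at h1
    simp only [Matrix.mulVec, dotProduct, hxdef, h1, Pi.single_apply]
  have hx : x ⬝ᵥ A *ᵥ x = x s := by rw [hmul, dotProduct_single, mul_one]
  have hxne : x ≠ 0 := by
    intro h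
    rw [h, Matrix.mulVec_zero] at hmul
    have := congrFun hmul s
    simp at this
  have hxs_pos : 0 < x s := by
    have := hApos.dotProduct_mulVec_pos hxne
    rwa [star_trivial, hx] at this
  have hb := hbound x
  rw [hx] at hb
  have hsq : x s ^ 2 ≤ ∑ i, x i ^ 2 :=
    Finset.single_le_sum (f := fun i => x i ^ 2) (fun i _ => sq_nonneg _) (Finset.mem_univ s)
  have hμx : μ * x s ≤ 1 := by
    have h2 : μ * x s ^ 2 ≤ x s := le_trans (by nlinarith) hb
    nlinarith
  -- x s = det B / det A
  have hxs_eq : x s = (A.det)⁻¹ * B.det := by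
    rw [hxdef]
    rw [Matrix.inv_def]
    simp only [Matrix.smul_apply, smul_eq_mul]
    rw [Ring.inverse_eq_inv]
    congr 1
    rw [Matrix.adjugate_fin_succ_eq_det_submatrix]
    rw [← two_mul, pow_mul, neg_one_sq, one_pow, one_mul]
    rfl
  have hfinal : μ ≤ A.det / B.det := by
    have h3 : μ ≤ 1 / x s := (le_div_iff₀ hxs_pos).2 hμx
    have h4 : 1 / x s = A.det / B.det := by
      rw [hxs_eq]; field_simp
    rwa [h4] at h3
  calc M ≤ μ := le_max_left M 1
  _ ≤ A.det / B.det := hfinal
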